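/- arXiv:1907.10392 — 2 statements merged into one kernel-verified Lean document; each statement's English description precedes it below -/
import Mathlib

section
/- Let a, a' ∈ ℝ^m and b, b' ∈ ℝ^k all be nonzero vectors, and let (a, b), (a', b') ∈ ℝ^{m+k} denote the stacked (concatenated) vectors. Then min{ sin∠(a', a), sin∠(b', b) } ≤ sin∠( (a', b'), (a, b) ), and √( sin²∠(a', a) + sin²∠(b', b) ) ≤ ϱ · sin∠( (a', b'), (a, b) ), where ϱ = √( 1 + max{ ‖a‖²/‖b‖², ‖b‖²/‖a‖² } ). -/
/-- `sinAngle w' w` is the sine of the angle between `w` and the line spanned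
by `w'`, i.e. `min_{μ ∈ ℝ} ‖w − μ w'‖ / ‖w‖`. -/
noncomputable def sinAngle {ι : Type*} [Fintype ι] (w' w : EuclideanSpace ℝ ι) : ℝ :=
  ⨅ μ : ℝ, ‖w - μ • w'‖ / ‖w‖

/-- The stacked (concatenated) vector of `a` and `b`. -/
def stack {m k : ℕ} (a : EuclideanSpace ℝ (Fin m)) (b : EuclideanSpace ℝ (Fin k)) :
    EuclideanSpace ℝ (Fin m ⊕ Fin k) :=
  WithLp.toLp 2 (Sum.elim a b)

lemma stack_norm_sq {m k : ℕ} (x : EuclideanSpace ℝ (Fin m)) (y : EuclideanSpace ℝ (Fin k)) :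
    ‖stack x y‖ ^ 2 = ‖x‖ ^ 2 + ‖y‖ ^ 2 := by
  simp only [EuclideanSpace.norm_eq]
  rw [Real.sq_sqrt (by positivity), Real.sq_sqrt (by positivity), Real.sq_sqrt (by positivity)]
  rw [Fintype.sum_sum_type]
  rfl

lemma stack_sub_smul {m k : ℕ} (a a' : EuclideanSpace ℝ (Fin m))
    (b b' : EuclideanSpace ℝ (Fin k)) (μ : ℝ) :
    stack a b - μ • stack a' b' = stack (a - μ • a') (b - μ • b') := by
  ext i
  rcases i with i | i <;> rfl

lemma sinAngle_nonneg {ι : Type*} [Fintype ι] (w' w : EuclideanSpace ℝ ι) :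
    0 ≤ sinAngle w' w :=
  Real.iInf_nonneg fun _ => div_nonneg (norm_nonneg _) (norm_nonneg _)

lemma sinAngle_le {ι : Type*} [Fintype ι] (w' w : EuclideanSpace ℝ ι) (μ : ℝ) :
    sinAngle w' w ≤ ‖w - μ • w'‖ / ‖w‖ :=
  ciInf_le ⟨0, by rintro x ⟨ν, rfl⟩; exact div_nonneg (norm_nonneg _) (norm_nonneg _)⟩ μ

/-- min{sin∠(a', a), sin∠(b', b)} ≤ sin∠((a', b'), (a, b)), and
√(sin²∠(a', a) + sin²∠(b', b)) ≤ ϱ sin∠((a', b'), (a, b)) with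
ϱ = √(1 + max{‖a‖²/‖b‖², ‖b‖²/‖a‖²}). -/
theorem stmt_16 {m k : ℕ}
    (a a' : EuclideanSpace ℝ (Fin m)) (b b' : EuclideanSpace ℝ (Fin k))
    (ha : a ≠ 0) (ha' : a' ≠ 0) (hb : b ≠ 0) (hb' : b' ≠ 0) :
    min (sinAngle a' a) (sinAngle b' b) ≤ sinAngle (stack a' b') (stack a b) ∧
    Real.sqrt (sinAngle a' a ^ 2 + sinAngle b' b ^ 2)
      ≤ Real.sqrt (1 + max (‖a‖ ^ 2 / ‖b‖ ^ 2) (‖b‖ ^ 2 / ‖a‖ ^ 2)) *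
        sinAngle (stack a' b') (stack a b) := by
  have hA : (0 : ℝ) < ‖a‖ := norm_pos_iff.mpr ha
  have hB : (0 : ℝ) < ‖b‖ := norm_pos_iff.mpr hb
  set A := ‖a‖ with hAdef
  set B := ‖b‖ with hBdef
  set sa := sinAngle a' a with hsa
  set sb := sinAngle b' b with hsb
  have hsa0 : 0 ≤ sa := sinAngle_nonneg a' a
  have hsb0 : 0 ≤ sb := sinAngle_nonneg b' b
  have hkeyA : ∀ μ : ℝ, sa * A ≤ ‖a - μ • a'‖ := fun μ =>
    (le_div_iff₀ hA).mp (sinAngle_le a' a μ)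
  have hkeyB : ∀ μ : ℝ, sb * B ≤ ‖b - μ • b'‖ := fun μ =>
    (le_div_iff₀ hB).mp (sinAngle_le b' b μ)
  have hStSq : ‖stack a b‖ ^ 2 = A ^ 2 + B ^ 2 := stack_norm_sq a b
  have hSt : 0 < ‖stack a b‖ := by
    nlinarith [norm_nonneg (stack a b)]
  -- general principle for lower-bounding the sine of the stacked angle
  have hlow : ∀ c : ℝ, 0 ≤ c → c ^ 2 * (A ^ 2 + B ^ 2) ≤ sa ^ 2 * A ^ 2 + sb ^ 2 * B ^ 2 →
      c ≤ sinAngle (stack a' b') (stack a b) := by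
    intro c hc hle
    apply le_ciInf
    intro μ
    rw [le_div_iff₀ hSt]
    have h1 : ‖stack a b - μ • stack a' b'‖ ^ 2 = ‖a - μ • a'‖ ^ 2 + ‖b - μ • b'‖ ^ 2 := by
      rw [stack_sub_smul]; exact stack_norm_sq _ _
    have hA1 := hkeyA μ
    have hB1 := hkeyB μ
    have hsq : (c * ‖stack a b‖) ^ 2 ≤ ‖stack a b - μ • stack a' b'‖ ^ 2 := by
      rw [mul_pow, hStSq, h1]
      nlinarith [mul_nonneg hsa0 hA.le, mul_nonneg hsb0 hB.le,
        norm_nonneg (a - μ • a'), norm_nonneg (b - μ • b')]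
    exact le_of_pow_le_pow_left₀ two_ne_zero (norm_nonneg _) hsq
  constructor
  · apply hlow _ (le_min hsa0 hsb0)
    have h0 : 0 ≤ min sa sb := le_min hsa0 hsb0
    have h1 : (min sa sb) ^ 2 ≤ sa ^ 2 := pow_le_pow_left₀ h0 (min_le_left _ _) 2
    have h2 : (min sa sb) ^ 2 ≤ sb ^ 2 := pow_le_pow_left₀ h0 (min_le_right _ _) 2
    nlinarith [sq_nonneg A, sq_nonneg B]
  · have ht0 : 0 < min (A ^ 2) (B ^ 2) := lt_min (by positivity) (by positivity)
    have hAB0 : 0 < A ^ 2 + B ^ 2 := by positivity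
    have hMeq : 1 + max (A ^ 2 / B ^ 2) (B ^ 2 / A ^ 2)
        = (A ^ 2 + B ^ 2) / min (A ^ 2) (B ^ 2) := by
      rcases le_total (A ^ 2) (B ^ 2) with h | h
      · rw [min_eq_left h, max_eq_right, add_div, div_self (by positivity : (A:ℝ)^2 ≠ 0)]
        calc A ^ 2 / B ^ 2 ≤ 1 := div_le_one_of_le₀ h (by positivity)
          _ ≤ B ^ 2 / A ^ 2 := (one_le_div (by positivity)).mpr h
      · rw [min_eq_right h, max_eq_left, add_div, div_self (by positivity : (B:ℝ)^2 ≠ 0),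
          add_comm]
        calc B ^ 2 / A ^ 2 ≤ 1 := div_le_one_of_le₀ h (by positivity)
          _ ≤ A ^ 2 / B ^ 2 := (one_le_div (by positivity)).mpr h
    have hcS : Real.sqrt ((sa ^ 2 + sb ^ 2) * min (A ^ 2) (B ^ 2) / (A ^ 2 + B ^ 2))
        ≤ sinAngle (stack a' b') (stack a b) := by
      apply hlow _ (Real.sqrt_nonneg _)
      rw [Real.sq_sqrt (by positivity), div_mul_cancel₀ _ (ne_of_gt hAB0)]
      have h1 : min (A ^ 2) (B ^ 2) ≤ A ^ 2 := min_le_left _ _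
      have h2 : min (A ^ 2) (B ^ 2) ≤ B ^ 2 := min_le_right _ _
      nlinarith [sq_nonneg sa, sq_nonneg sb]
    rw [hMeq]
    calc Real.sqrt (sa ^ 2 + sb ^ 2)
        = Real.sqrt ((A ^ 2 + B ^ 2) / min (A ^ 2) (B ^ 2)) *
            Real.sqrt ((sa ^ 2 + sb ^ 2) * min (A ^ 2) (B ^ 2) / (A ^ 2 + B ^ 2)) := by
          rw [← Real.sqrt_mul (by positivity)]
          congr 1
          field_simp
      _ ≤ _ := mul_le_mul_of_nonneg_left hcS (Real.sqrt_nonneg _)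
end

section
/- Let u, û ∈ ℝ^m be nonzero with ‖u‖ = 1, and let x_β, x̂ ∈ ℝ^n be nonzero. Let y = (u, x_β) and ŷ = (û, x̂) denote the stacked (concatenated) vectors in ℝ^{m+n}. Then sin∠(x̂, x_β) ≤ √( 1 + 1/‖x_β‖² ) · sin∠(ŷ, y) and sin∠(û, u) ≤ √( 1 + ‖x_β‖² ) · sin∠(ŷ, y). -/
lemma sq_norm_stack {m k : ℕ} (a : EuclideanSpace ℝ (Fin m)) (b : EuclideanSpace ℝ (Fin k)) :
    ‖stack a b‖ ^ 2 = ‖a‖ ^ 2 + ‖b‖ ^ 2 := by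
  simp only [EuclideanSpace.norm_eq]
  rw [Real.sq_sqrt (by positivity), Real.sq_sqrt (by positivity),
    Real.sq_sqrt (by positivity), Fintype.sum_sum_type]
  simp [stack]

/-- with y = (u, x_β) and ŷ = (û, x̂),
sin∠(x̂, x_β) ≤ √(1 + 1/‖x_β‖²) sin∠(ŷ, y) and
sin∠(û, u) ≤ √(1 + ‖x_β‖²) sin∠(ŷ, y). -/
theorem stmt_18 {m n : ℕ}
    (u uh : EuclideanSpace ℝ (Fin m)) (hu : ‖u‖ = 1) (huh : uh ≠ 0)
    (xb xh : EuclideanSpace ℝ (Fin n)) (hxb : xb ≠ 0) (hxh : xh ≠ 0) :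
    sinAngle xh xb
        ≤ Real.sqrt (1 + 1 / ‖xb‖ ^ 2) * sinAngle (stack uh xh) (stack u xb) ∧
    sinAngle uh u
        ≤ Real.sqrt (1 + ‖xb‖ ^ 2) * sinAngle (stack uh xh) (stack u xb) := by
  set Y := stack u xb with hY
  set Yh := stack uh xh with hYh
  have hxbn : (0:ℝ) < ‖xb‖ := norm_pos_iff.mpr hxb
  have hYsq : ‖Y‖ ^ 2 = 1 + ‖xb‖ ^ 2 := by rw [hY, sq_norm_stack, hu]; ring
  have hYpos : (0:ℝ) < ‖Y‖ := by
    rcases (norm_nonneg Y).lt_or_eq with h | h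
    · exact h
    · exfalso; nlinarith [sq_nonneg ‖xb‖]
  have hbdd : ∀ μ : ℝ, ‖xb - μ • xh‖ ≤ ‖Y - μ • Yh‖ := by
    intro μ
    have h : ‖Y - μ • Yh‖ ^ 2 = ‖u - μ • uh‖ ^ 2 + ‖xb - μ • xh‖ ^ 2 := by
      rw [hY, hYh, stack_sub_smul, sq_norm_stack]
    nlinarith [norm_nonneg (Y - μ • Yh), norm_nonneg (xb - μ • xh), sq_nonneg ‖u - μ • uh‖]
  have hbdd' : ∀ μ : ℝ, ‖u - μ • uh‖ ≤ ‖Y - μ • Yh‖ := by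
    intro μ
    have h : ‖Y - μ • Yh‖ ^ 2 = ‖u - μ • uh‖ ^ 2 + ‖xb - μ • xh‖ ^ 2 := by
      rw [hY, hYh, stack_sub_smul, sq_norm_stack]
    nlinarith [norm_nonneg (Y - μ • Yh), norm_nonneg (u - μ • uh), sq_nonneg ‖xb - μ • xh‖]
  have hB : ∀ (w' w : EuclideanSpace ℝ (Fin n)),
      BddBelow (Set.range fun μ : ℝ => ‖w - μ • w'‖ / ‖w‖) := by
    intro w' w; exact ⟨0, by rintro x ⟨μ, rfl⟩; positivity⟩
  have hB' : ∀ (w' w : EuclideanSpace ℝ (Fin m)),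
      BddBelow (Set.range fun μ : ℝ => ‖w - μ • w'‖ / ‖w‖) := by
    intro w' w; exact ⟨0, by rintro x ⟨μ, rfl⟩; positivity⟩
  constructor
  · have hc : Real.sqrt (1 + 1 / ‖xb‖ ^ 2) = ‖Y‖ / ‖xb‖ := by
      rw [show (1 + 1 / ‖xb‖ ^ 2) = (‖Y‖ / ‖xb‖) ^ 2 by
        rw [div_pow, hYsq]; field_simp; ring]
      exact Real.sqrt_sq (by positivity)
    have heq : ‖Y‖ / ‖xb‖ * sinAngle Yh Y
        = ⨅ μ : ℝ, ‖Y‖ / ‖xb‖ * (‖Y - μ • Yh‖ / ‖Y‖) := by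
      rw [sinAngle, Real.mul_iInf_of_nonneg (by positivity)]
    rw [hc, heq]
    refine le_ciInf fun μ => ?_
    have h1 : sinAngle xh xb ≤ ‖xb - μ • xh‖ / ‖xb‖ := ciInf_le (hB xh xb) μ
    refine h1.trans ?_
    rw [show ‖Y‖ / ‖xb‖ * (‖Y - μ • Yh‖ / ‖Y‖) = ‖Y - μ • Yh‖ / ‖xb‖ by
      field_simp]
    exact div_le_div_of_nonneg_right (hbdd μ) hxbn.le
  · have hc : Real.sqrt (1 + ‖xb‖ ^ 2) = ‖Y‖ := by
      rw [← hYsq, Real.sqrt_sq (norm_nonneg _)]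
    have heq : ‖Y‖ * sinAngle Yh Y = ⨅ μ : ℝ, ‖Y‖ * (‖Y - μ • Yh‖ / ‖Y‖) := by
      rw [sinAngle, Real.mul_iInf_of_nonneg (by positivity)]
    rw [hc, heq]
    refine le_ciInf fun μ => ?_
    have h1 : sinAngle uh u ≤ ‖u - μ • uh‖ / ‖u‖ := ciInf_le (hB' uh u) μ
    refine h1.trans ?_
    rw [mul_div_cancel₀ _ hYpos.ne', hu, div_one]
    exact hbdd' μ
end
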